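/- Every finite co-learnable family of pairwise nonisomorphic structures is Fin-learnable: if K = (A_i)_{i<n} is co-learnable by some learner, then there exists a learner that Fin-learns K. -/

import Mathlib

/-- A structure on domain ℕ: a binary relation given as a map to `Bool`. -/
abbrev Struc := ℕ → ℕ → Bool

/-- The restrictions of `R` and `R'` to `{0,…,s} × {0,…,s}` agree. -/
def restrEq (R R' : Struc) (s : ℕ) : Prop :=
  ∀ x ≤ s, ∀ y ≤ s, R x y = R' x y

/-- `R` and `R'` are isomorphic structures. -/
def Isom (R R' : Struc) : Prop :=
  ∃ e : ℕ ≃ ℕ, ∀ x y, R' (e x) (e y) = R x y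

/-- `R↾s` embeds into `R'`: there is a map injective on `{0,…,s}` preserving the relation. -/
def EmbedsRestr (R : Struc) (s : ℕ) (R' : Struc) : Prop :=
  ∃ h : ℕ → ℕ, (∀ x ≤ s, ∀ y ≤ s, h x = h y → x = y) ∧
    (∀ x ≤ s, ∀ y ≤ s, R' (h x) (h y) = R x y)

/-- The learning domain of a family: all isomorphic copies of members of the family. -/
def LD {I : Type} (A : I → Struc) : Set Struc := {R | ∃ i, Isom R (A i)}

/-- A learner: its conjecture at stage `s` depends only on `R↾s`. -/
def IsLearner {I : Type} (M : Struc → ℕ → Option I) : Prop :=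
  ∀ R R' s, restrEq R R' s → M R s = M R' s

/-- `M` Ex-learns the family `A`. -/
def ExLearns {I : Type} (A : I → Struc) (M : Struc → ℕ → Option I) : Prop :=
  ∀ R i, Isom R (A i) → ∃ s₀, ∀ s ≥ s₀, M R s = some i

/-- `M` Fin-learns the family `A`. -/
def FinLearns {I : Type} (A : I → Struc) (M : Struc → ℕ → Option I) : Prop :=
  ∀ R i, Isom R (A i) →
    ∃ s₀, (∀ s < s₀, M R s = none) ∧ (∀ s ≥ s₀, M R s = some i)

/-- `M` co-learns the family `A`. -/
def CoLearns {I : Type} (A : I → Struc) (M : Struc → ℕ → Option I) : Prop :=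
  ∀ R i, Isom R (A i) → ∀ j, (∃ s, M R s = some j) ↔ j ≠ i

/-- `M` nUs-learns the family `A`: it Ex-learns it and never abandons the correct conjecture. -/
def NUsLearns {I : Type} (A : I → Struc) (M : Struc → ℕ → Option I) : Prop :=
  ExLearns A M ∧
    ∀ R i, Isom R (A i) → ∀ s, M R s = some i → ∀ t ≥ s, M R t = some i

/-- `M` Dec-learns the family `A`: it Ex-learns it and never repeats an abandoned conjecture. -/
def DecLearns {I : Type} (A : I → Struc) (M : Struc → ℕ → Option I) : Prop :=
  ExLearns A M ∧
    ∀ R ∈ LD A, ∀ (j : I) (s : ℕ), M R s = some j → M R (s + 1) ≠ some j →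
      ∀ t > s, M R t ≠ some j

/-- `M` PL-learns the family `A`: the unique conjecture output infinitely often is correct. -/
def PLLearns {I : Type} (A : I → Struc) (M : Struc → ℕ → Option I) : Prop :=
  ∀ R ∈ LD A, ∀ i, {s | M R s = some i}.Infinite ↔ Isom R (A i)

/-- The relation `E₀` on Baire space: eventual agreement. -/
def E0 (p q : ℕ → ℕ) : Prop := ∃ m, ∀ n ≥ m, p n = q n

/-- The relation `E₃` on `ℕ → (ℕ → ℕ)`: columnwise `E₀`. -/
def E3 (p q : ℕ → ℕ → ℕ) : Prop := ∀ m, E0 (p m) (q m)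

/-- The relation `E_range` on Baire space: equality of ranges. -/
def Erange (p q : ℕ → ℕ) : Prop := Set.range p = Set.range q

/-- Every finite co-learnable family of pairwise nonisomorphic structures is
Fin-learnable. -/
theorem coLearnable_to_finLearnable_of_finite (n : ℕ) (A : Fin n → Struc)
    (hA : ∀ i j, i ≠ j → ¬ Isom (A i) (A j))
    (h : ∃ M : Struc → ℕ → Option (Fin n), IsLearner M ∧ CoLearns A M) :
    ∃ M : Struc → ℕ → Option (Fin n), IsLearner M ∧ FinLearns A M := by
  obtain ⟨M, hM, hCo⟩ := h
  classical
  set S : Struc → ℕ → Finset (Fin n) :=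
    fun R s => (Finset.range (s+1)).biUnion (fun t => (M R t).toFinset) with hS
  have hmemS : ∀ R s j, j ∈ S R s ↔ ∃ t ≤ s, M R t = some j := by
    intro R s j
    simp [hS, Finset.mem_biUnion, Finset.mem_range, Nat.lt_succ_iff, Option.mem_toFinset]
  refine ⟨fun R s => if (S R s).card = n - 1 then (S R s)ᶜ.min else none, ?_, ?_⟩
  · intro R R' s hre
    have hSeq : S R s = S R' s := by
      apply Finset.biUnion_congr rfl
      intro t ht
      rw [Finset.mem_range, Nat.lt_succ_iff] at ht
      have : M R t = M R' t := hM R R' t (fun x hx y hy => hre x (hx.trans ht) y (hy.trans ht))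
      rw [this]
    simp only [hSeq]
  · intro R i hIso
    have hnot : ∀ s, M R s ≠ some i := by
      intro s hs
      exact ((hCo R i hIso i).mp ⟨s, hs⟩) rfl
    have hsub : ∀ s, S R s ⊆ ({i} : Finset (Fin n))ᶜ := by
      intro s j hj
      obtain ⟨t, _, ht⟩ := (hmemS R s j).mp hj
      simp only [Finset.mem_compl, Finset.mem_singleton]
      rintro rfl; exact hnot t ht
    have hmono : ∀ ⦃s s' : ℕ⦄, s ≤ s' → S R s ⊆ S R s' := by
      intro s s' hss j hj
      obtain ⟨t, ht, h⟩ := (hmemS R s j).mp hj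
      exact (hmemS R s' j).mpr ⟨t, ht.trans hss, h⟩
    have hcardc : (({i} : Finset (Fin n))ᶜ).card = n - 1 := by
      simp [Finset.card_compl]
    have hex : ∃ s, (S R s).card = n - 1 := by
      have hexist : ∀ j : Fin n, j ≠ i → ∃ t, M R t = some j := by
        intro j hj; exact (hCo R i hIso j).mpr hj
      choose f hf using fun j (hj : j ∈ ({i} : Finset (Fin n))ᶜ) =>
        hexist j (by simpa using hj)
      set T := (({i} : Finset (Fin n))ᶜ).sup (fun j => if hj : j ∈ ({i} : Finset (Fin n))ᶜ then f j hj else 0) with hT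
      refine ⟨T, ?_⟩
      have heq : S R T = ({i} : Finset (Fin n))ᶜ := by
        apply Finset.Subset.antisymm (hsub _)
        intro j hj
        refine (hmemS R T j).mpr ⟨f j hj, ?_, hf j hj⟩
        have := Finset.le_sup (f := fun j => if hj : j ∈ ({i} : Finset (Fin n))ᶜ then f j hj else 0) hj
        simpa [hT, hj] using this
      rw [heq, hcardc]
    have hkey : ∀ s, (S R s).card = n - 1 → S R s = ({i} : Finset (Fin n))ᶜ := by
      intro s hs
      exact Finset.eq_of_subset_of_card_le (hsub s) (by rw [hs, hcardc])
    refine ⟨Nat.find hex, ?_, ?_⟩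
    · intro s hslt
      have : ¬ (S R s).card = n - 1 := Nat.find_min hex hslt
      simp [this]
    · intro s hs
      have heq : S R s = ({i} : Finset (Fin n))ᶜ := by
        apply Finset.Subset.antisymm (hsub s)
        rw [← hkey _ (Nat.find_spec hex)]
        exact hmono hs
      have hcard : (S R s).card = n - 1 := by rw [heq, hcardc]
      show (if (S R s).card = n - 1 then (S R s)ᶜ.min else none) = some i
      have hmin : (S R s)ᶜ.min = (i : WithTop (Fin n)) := by rw [heq, compl_compl, Finset.min_singleton]
      exact (if_pos hcard).trans hmin
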